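/- Let m_P be the perfect metric. Let H be the set of arcs of G^∧π remaining after deleting every arc (x,y) for which there exists an intermediate or upper triangle {x,y,z} with m_P(x,y) = m_P(x,z) + m_P(z,y) (where m_P(u,v) denotes the weight of the edge {u,v} of G*π). Then for all vertices s and t there exists an up-down st-path all of whose arcs belong to H and whose length under m_P equals the shortest st-path distance in G under w. -/

import Mathlib

open SimpleGraph
open scoped ENNReal

variable {V : Type*}

/-- One step of vertex contraction: remove `v` from the current graph and add an edge
between every pair of its current neighbors. -/
def chStep (H : SimpleGraph V) (v : V) : SimpleGraph V where
  Adj a b := a ≠ b ∧ a ≠ v ∧ b ≠ v ∧ (H.Adj a b ∨ (H.Adj v a ∧ H.Adj v b))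
  symm := by
    constructor
    rintro a b ⟨h1, h2, h3, h4⟩
    refine ⟨h1.symm, h3, h2, ?_⟩
    rcases h4 with h | ⟨ha, hb⟩
    · exact Or.inl h.symm
    · exact Or.inr ⟨hb, ha⟩
  loopless := ⟨fun a h => h.1 rfl⟩

/-- All edges ever present while contracting the vertices of the list in order:
the edges of the initial graph together with all added shortcuts. -/
def chList : SimpleGraph V → List V → SimpleGraph V
  | H, [] => H
  | H, v :: l => H ⊔ chList (chStep H v) l

/-- The rank of a vertex with respect to the contraction order `π`. -/
def rk {n : ℕ} (π : Fin n ≃ V) (v : V) : ℕ := (π.symm v : ℕ)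

/-- The contraction hierarchy `G*π`: contract `π 0, π 1, …` in this order and collect
all original edges and all added shortcuts. -/
def chGraph {n : ℕ} (G : SimpleGraph V) (π : Fin n ≃ V) : SimpleGraph V :=
  chList G ((List.finRange n).map ⇑π)

/-- A list of vertices is up-down w.r.t. a rank function: ranks strictly increase
along a prefix and strictly decrease along the remaining suffix, the two parts
meeting at the maximum-rank vertex. -/
def IsUpDown (r : V → ℕ) (l : List V) : Prop :=
  ∃ l₁ x l₂, l = l₁ ++ x :: l₂ ∧
    List.Chain' (fun a b => r a < r b) (l₁ ++ [x]) ∧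
    List.Chain' (fun a b => r b < r a) (x :: l₂)

/-- Reachability in the upward directed graph `G^∧π` (edges of `G*π` directed from
lower to higher rank): the vertex set of the search space `SS v`. -/
def UpReach {n : ℕ} (G : SimpleGraph V) (π : Fin n ≃ V) (v u : V) : Prop :=
  Relation.ReflTransGen (fun a b => (chGraph G π).Adj a b ∧ rk π a < rk π b) v u

/-- Length of a walk: the sum of the weights of its edges. -/
noncomputable def wlen {H : SimpleGraph V} (m : V → V → ℝ≥0∞) {s t : V}
    (p : H.Walk s t) : ℝ≥0∞ :=
  (p.darts.map (fun d => m d.toProd.1 d.toProd.2)).sum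

/-- Shortest path distance in a graph `H` under edge weights `m`. -/
noncomputable def gdist (H : SimpleGraph V) (m : V → V → ℝ≥0∞) (s t : V) : ℝ≥0∞ :=
  ⨅ (p : H.Walk s t), wlen m p

/-- Minimum length of an up-down `s`-`t` path in `G*π`. -/
noncomputable def updist {n : ℕ} (G : SimpleGraph V) (π : Fin n ≃ V)
    (m : V → V → ℝ≥0∞) (s t : V) : ℝ≥0∞ :=
  ⨅ (p : (chGraph G π).Walk s t) (_ : IsUpDown (rk π) p.support), wlen m p

/-- Minimum length of a strictly rank-increasing `u`-`v` path in `G*π`. -/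
noncomputable def upOnlyDist {n : ℕ} (G : SimpleGraph V) (π : Fin n ≃ V)
    (m : V → V → ℝ≥0∞) (u v : V) : ℝ≥0∞ :=
  ⨅ (p : (chGraph G π).Walk u v)
    (_ : List.Chain' (fun a b => rk π a < rk π b) p.support), wlen m p

/-- `S` is a balanced separator of the subgraph of `G` induced by `U`. -/
def IsBalancedSepOn [DecidableEq V] (G : SimpleGraph V) (U S : Finset V) : Prop :=
  S ⊆ U ∧ ∃ A B : Finset V, A ⊆ U ∧ B ⊆ U ∧
    Disjoint A B ∧ Disjoint A S ∧ Disjoint B S ∧ A ∪ B ∪ S = U ∧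
    (∀ a ∈ A, ∀ b ∈ B, ¬ G.Adj a b) ∧
    3 * A.card ≤ 2 * U.card ∧ 3 * B.card ≤ 2 * U.card

/-- Nested dissection orders (as lists, earliest contracted first, separator last)
of induced subgraphs of `G`, in which the separator chosen at every recursion step on
a `k`-vertex subgraph is balanced and has cardinality at most `c * k ^ α`. -/
inductive IsNDOrder [DecidableEq V] (G : SimpleGraph V) (c α : ℝ) : Finset V → List V → Prop
  | empty : IsNDOrder G c α ∅ []
  | step {U S A B : Finset V} {lA lB lS : List V} :
      Disjoint A B → Disjoint A S → Disjoint B S → A ∪ B ∪ S = U →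
      (∀ a ∈ A, ∀ b ∈ B, ¬ G.Adj a b) →
      3 * A.card ≤ 2 * U.card → 3 * B.card ≤ 2 * U.card →
      ((S.card : ℝ) ≤ c * (U.card : ℝ) ^ α) →
      lS.Nodup → lS.toFinset = S →
      IsNDOrder G c α A lA → IsNDOrder G c α B lB →
      IsNDOrder G c α U (lA ++ lB ++ lS)

/-- Number of vertices of the search space `SS v` in `G^∧π`. -/
noncomputable def nVertsSS {n : ℕ} (G : SimpleGraph V) (π : Fin n ≃ V) (v : V) : ℕ :=
  {u | UpReach G π v u}.ncard

/-- Number of arcs of the search space `SS v` in `G^∧π`: arcs of `G^∧π` with both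
endpoints reachable from `v`. -/
noncomputable def nArcsSS {n : ℕ} (G : SimpleGraph V) (π : Fin n ≃ V) (v : V) : ℕ :=
  {q : V × V | (chGraph G π).Adj q.1 q.2 ∧ rk π q.1 < rk π q.2 ∧
    UpReach G π v q.1 ∧ UpReach G π v q.2}.ncard

/-- The rank sequence of a walk: for each edge, the minimum of the ranks of its
endpoints, sorted in decreasing order. -/
def rankSeq {H : SimpleGraph V} (r : V → ℕ) {s t : V} (p : H.Walk s t) : List ℕ :=
  (p.darts.map (fun d => min (r d.toProd.1) (r d.toProd.2))).insertionSort (· ≥ ·)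

/-- Directed length of a walk in `G*π` under a pair of directed metrics `(mu, md)`:
each edge traversed from lower rank to higher rank costs its upward weight,
each edge traversed from higher rank to lower rank costs its downward weight. -/
noncomputable def dlen {H : SimpleGraph V} (r : V → ℕ) (mu md : V → V → ℝ≥0∞)
    {s t : V} (p : H.Walk s t) : ℝ≥0∞ :=
  (p.darts.map (fun d =>
    if r d.toProd.1 < r d.toProd.2 then mu d.toProd.1 d.toProd.2
    else md d.toProd.2 d.toProd.1)).sum

/-- Length of a directed walk `s :: l` under arc weights `wD`. -/
noncomputable def dWalkLen (wD : V → V → ℝ≥0∞) : V → List V → ℝ≥0∞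
  | _, [] => 0
  | s, x :: l => wD s x + dWalkLen wD x l

/-- Shortest directed path distance in the directed graph `D` under arc weights `wD`. -/
noncomputable def ddist (D : V → V → Prop) (wD : V → V → ℝ≥0∞) (s t : V) : ℝ≥0∞ :=
  ⨅ (l : List V) (_ : List.Chain D s l ∧ l.getLastD s = t), dWalkLen wD s l

/-! ### Auxiliary machinery for stmt11 -/

section Stmt11Aux

variable {V : Type*}

/-! #### chList basics -/

lemma le_chList : ∀ (l : List V) (H : SimpleGraph V), H ≤ chList H l
  | [], _ => le_rfl
  | _ :: _, _ => le_sup_left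

lemma chList_isolated : ∀ (l : List V) (H : SimpleGraph V) {u : V},
    (∀ y, ¬ H.Adj u y) → ∀ y, ¬ (chList H l).Adj u y
  | [], _, _, h => h
  | v :: l, H, u, h => by
    intro y hy
    rcases (SimpleGraph.sup_adj _ _ _ _).mp hy with h' | h'
    · exact h y h'
    · refine chList_isolated l (chStep H v) ?_ y h'
      rintro z ⟨_, _, _, hz | ⟨hz, _⟩⟩
      · exact h z hz
      · exact h v hz.symm

lemma chList_key : ∀ (l₁ l₂ : List V) (H : SimpleGraph V) {v a b : V},
    (l₁ ++ v :: l₂).Nodup → a ∈ l₂ → b ∈ l₂ → a ≠ b →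
    (chList H (l₁ ++ v :: l₂)).Adj v a → (chList H (l₁ ++ v :: l₂)).Adj v b →
    (chList H (l₁ ++ v :: l₂)).Adj a b := by
  intro l₁
  induction l₁ with
  | nil =>
    intro l₂ H v a b hnd ha hb hab hva hvb
    simp only [List.nil_append] at *
    have hviso : ∀ y, ¬ (chList (chStep H v) l₂).Adj v y := by
      refine chList_isolated l₂ (chStep H v) ?_
      rintro z ⟨_, hz, _, _⟩
      exact hz rfl
    have hHa : H.Adj v a := by
      rcases (SimpleGraph.sup_adj _ _ _ _).mp hva with h | h
      · exact h
      · exact absurd h (hviso a)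
    have hHb : H.Adj v b := by
      rcases (SimpleGraph.sup_adj _ _ _ _).mp hvb with h | h
      · exact h
      · exact absurd h (hviso b)
    have hvnot : v ∉ l₂ := (List.nodup_cons.mp hnd).1
    have hstep : (chStep H v).Adj a b :=
      ⟨hab, fun h => hvnot (h ▸ ha), fun h => hvnot (h ▸ hb), Or.inr ⟨hHa, hHb⟩⟩
    exact (SimpleGraph.sup_adj _ _ _ _).mpr (Or.inr (le_chList l₂ (chStep H v) hstep))
  | cons x l₁ ih =>
    intro l₂ H v a b hnd ha hb hab hva hvb
    simp only [List.cons_append] at *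
    have hxnot : x ∉ l₁ ++ v :: l₂ := (List.nodup_cons.mp hnd).1
    have hnd' : (l₁ ++ v :: l₂).Nodup := (List.nodup_cons.mp hnd).2
    have hmem : ∀ {c : V}, c ∈ l₂ → c ≠ x := by
      intro c hc h
      exact hxnot (h ▸ (List.mem_append.mpr (Or.inr (List.mem_cons_of_mem _ hc))))
    have hvx : v ≠ x := by
      intro h
      exact hxnot (h ▸ (List.mem_append.mpr (Or.inr List.mem_cons_self)))
    have push : ∀ {c : V}, c ∈ l₂ →
        (chList H (x :: (l₁ ++ v :: l₂))).Adj v c →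
        (chList (chStep H x) (l₁ ++ v :: l₂)).Adj v c := by
      intro c hc hadj
      rcases (SimpleGraph.sup_adj _ _ _ _).mp hadj with h | h
      · exact le_chList _ _ ⟨h.ne, hvx, hmem hc, Or.inl h⟩
      · exact h
    have := ih l₂ (chStep H x) hnd' ha hb hab (push ha hva) (push hb hvb)
    exact (SimpleGraph.sup_adj _ _ _ _).mpr (Or.inr this)

lemma chGraph_key {n : ℕ} (G : SimpleGraph V) (π : Fin n ≃ V) {v a b : V}
    (hab : a ≠ b) (hva : rk π v < rk π a) (hvb : rk π v < rk π b)
    (h1 : (chGraph G π).Adj v a) (h2 : (chGraph G π).Adj v b) :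
    (chGraph G π).Adj a b := by
  classical
  set l : List V := (List.finRange n).map ⇑π with hl
  have hlen : l.length = n := by simp [hl]
  have hget : ∀ (j : ℕ) (hj : j < l.length), l[j] = π ⟨j, by omega⟩ := by
    intro j hj
    simp [hl, List.getElem_finRange, Fin.cast]
  have hnd : l.Nodup := (List.nodup_finRange n).map π.injective
  set i := rk π v with hi
  have hiv : i < l.length := by rw [hlen]; exact (π.symm v).isLt
  have hveq : l[i] = v := by
    rw [hget i hiv]
    have : (⟨i, by omega⟩ : Fin n) = π.symm v := by
      ext; simp [hi, rk]
    rw [this, Equiv.apply_symm_apply]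
  have hdecomp : l = l.take i ++ v :: l.drop (i + 1) := by
    conv_lhs => rw [← List.take_append_drop i l]
    rw [List.drop_eq_getElem_cons hiv, hveq]
  have hmemdrop : ∀ c : V, i < rk π c → c ∈ l.drop (i + 1) := by
    intro c hc
    have hcl : rk π c < l.length := by rw [hlen]; exact (π.symm c).isLt
    have hj : rk π c - (i + 1) < (l.drop (i + 1)).length := by
      rw [List.length_drop]; omega
    have : (l.drop (i + 1))[rk π c - (i + 1)] = c := by
      rw [List.getElem_drop]
      have harith : i + 1 + (rk π c - (i + 1)) = rk π c := by omega
      simp_rw [harith]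
      rw [hget (rk π c) hcl]
      have : (⟨rk π c, by omega⟩ : Fin n) = π.symm c := by ext; simp [rk]
      rw [this, Equiv.apply_symm_apply]
    exact this ▸ List.getElem_mem _
  have hnd' : (l.take i ++ v :: l.drop (i + 1)).Nodup := hdecomp ▸ hnd
  have key := chList_key (l.take i) (l.drop (i + 1)) G hnd'
    (hmemdrop a hva) (hmemdrop b hvb) hab
  have hrw : chGraph G π = chList G (l.take i ++ v :: l.drop (i + 1)) := by
    rw [chGraph, ← hl, ← hdecomp]
  rw [hrw] at h1 h2 ⊢
  exact key h1 h2

/-! #### pairSum -/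

def pairSum {M : Type*} [AddCommMonoid M] (f : V → V → M) : List V → M
  | [] => 0
  | [_] => 0
  | a :: b :: l => f a b + pairSum f (b :: l)

lemma pairSum_split {M : Type*} [AddCommMonoid M] (f : V → V → M) :
    ∀ (l₁ : List V) (a : V) (l₂ : List V),
      pairSum f (l₁ ++ a :: l₂) = pairSum f (l₁ ++ [a]) + pairSum f (a :: l₂) := by
  intro l₁
  induction l₁ with
  | nil => intro a l₂; simp [pairSum]
  | cons x l₁ ih =>
    intro a l₂
    cases l₁ with
    | nil => simp [pairSum, add_assoc]
    | cons y m =>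
      have h1 : (x :: y :: m) ++ a :: l₂ = x :: (y :: m ++ a :: l₂) := rfl
      have h2 : (x :: y :: m) ++ [a] = x :: (y :: m ++ [a]) := rfl
      rw [h1, h2]
      have h3 : y :: m ++ a :: l₂ = y :: (m ++ a :: l₂) := rfl
      have h4 : y :: m ++ [a] = y :: (m ++ [a]) := rfl
      rw [h3, h4]
      show f x y + pairSum f (y :: (m ++ a :: l₂)) =
        f x y + pairSum f (y :: (m ++ [a])) + pairSum f (a :: l₂)
      have := ih a l₂
      simp only [List.cons_append] at this
      rw [this, add_assoc]

lemma pairSum_le_length (f : V → V → ℕ) (c : ℕ)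
    (hf : ∀ a b, f a b ≤ c) : ∀ l : List V, pairSum f l ≤ l.length * c := by
  intro l
  induction l with
  | nil => simp [pairSum]
  | cons a m ih =>
    cases m with
    | nil => simp [pairSum]
    | cons b m' =>
      have hthis : pairSum f (a :: b :: m') = f a b + pairSum f (b :: m') := rfl
      rw [hthis]
      calc f a b + pairSum f (b :: m') ≤ c + (b :: m').length * c :=
            add_le_add (hf a b) ih
        _ = ((b :: m').length + 1) * c := by ring
        _ = (a :: b :: m').length * c := by simp

lemma head?_append_cons (l₁ : List V) (a : V) (X Y : List V) :
    (l₁ ++ a :: X).head? = (l₁ ++ a :: Y).head? := by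
  cases l₁ <;> simp

lemma getLast?_append_cons (X : List V) (b : V) (l₂ : List V) :
    (X ++ b :: l₂).getLast? = (b :: l₂).getLast? := by
  rw [List.getLast?_append]
  cases hx : (b :: l₂).getLast? with
  | none => simp at hx
  | some c => rfl

/-! #### Up-down structure from valley-freeness -/

def Consec (l : List V) (a b : V) : Prop := ∃ l₁ l₂, l = l₁ ++ a :: b :: l₂

lemma descend_of_noValley (r : V → ℕ) :
    ∀ (l : List V) (x y : V), r y < r x →
    (¬ ∃ l₁ a v b l₂, x :: y :: l = l₁ ++ a :: v :: b :: l₂ ∧ r v < r a ∧ r v < r b) →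
    List.Chain' (fun a b => r a ≠ r b) (x :: y :: l) →
    List.Chain' (fun a b => r b < r a) (x :: y :: l) := by
  intro l
  induction l with
  | nil => intro x y h _ _; exact List.isChain_pair.mpr h
  | cons c m ih =>
    intro x y hyx hnv hne
    have hyc : r y ≠ r c := (List.isChain_cons_cons.mp (List.isChain_cons_cons.mp hne).2).1
    have hcy : r c < r y := by
      rcases lt_or_gt_of_ne hyc with h | h
      · exact absurd ⟨[], x, y, c, m, rfl, hyx, h⟩ hnv
      · exact h
    have hnv' : ¬ ∃ l₁ a v b l₂, y :: c :: m = l₁ ++ a :: v :: b :: l₂ ∧ r v < r a ∧ r v < r b := by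
      rintro ⟨l₁, a, v, b, l₂, heq, h1, h2⟩
      exact hnv ⟨x :: l₁, a, v, b, l₂, by rw [List.cons_append, ← heq], h1, h2⟩
    have := ih y c hcy hnv' (List.isChain_cons_cons.mp hne).2
    exact List.isChain_cons_cons.mpr ⟨hyx, this⟩

lemma noValley_isUpDown (r : V → ℕ) :
    ∀ (l : List V) (x : V),
    (¬ ∃ l₁ a v b l₂, x :: l = l₁ ++ a :: v :: b :: l₂ ∧ r v < r a ∧ r v < r b) →
    List.Chain' (fun a b => r a ≠ r b) (x :: l) →
    IsUpDown r (x :: l) := by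
  intro l
  induction l with
  | nil => intro x _ _; exact ⟨[], x, [], rfl, List.isChain_singleton x, List.isChain_singleton x⟩
  | cons y m ih =>
    intro x hnv hne
    have hxy : r x ≠ r y := (List.isChain_cons_cons.mp hne).1
    rcases lt_or_gt_of_ne hxy with h | h
    · have hnv' : ¬ ∃ l₁ a v b l₂, y :: m = l₁ ++ a :: v :: b :: l₂ ∧ r v < r a ∧ r v < r b := by
        rintro ⟨l₁, a, v, b, l₂, heq, h1, h2⟩
        exact hnv ⟨x :: l₁, a, v, b, l₂, by rw [List.cons_append, ← heq], h1, h2⟩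
      obtain ⟨l₁, c, l₂, heq, hinc, hdec⟩ := ih y hnv' (List.isChain_cons_cons.mp hne).2
      refine ⟨x :: l₁, c, l₂, by rw [List.cons_append, ← heq], ?_, hdec⟩
      rw [List.cons_append]
      have hfirst : (l₁ ++ [c]).head? = some y := by
        cases l₁ with
        | nil =>
          have : c = y := by
            have := heq
            simp only [List.nil_append, List.cons.injEq] at this
            exact this.1.symm
          simp [this]
        | cons d l₁' =>
          have : d = y := by
            have := heq
            simp only [List.cons_append, List.cons.injEq] at this
            exact this.1.symm
          simp [this]
      refine List.isChain_cons.mpr ⟨?_, hinc⟩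
      intro z hz
      rw [hfirst, Option.mem_def, Option.some.injEq] at hz
      exact hz ▸ h
    · refine ⟨[], x, y :: m, rfl, List.isChain_singleton x, ?_⟩
      exact descend_of_noValley r m x y h hnv hne

lemma chain_lt_length_le {n : ℕ} (r : V → ℕ) (hr : ∀ v, r v < n) :
    ∀ (m : List V), List.Chain' (fun a b => r a < r b) m → m.length ≤ n := by
  classical
  intro m hc
  have hmap : List.Chain' (· < ·) (m.map r) := (List.isChain_map r).mpr hc
  have hpw : (m.map r).Pairwise (· < ·) := List.isChain_iff_pairwise.mp hmap
  have hnd : (m.map r).Nodup := hpw.imp Nat.ne_of_lt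
  have hsub : (m.map r).toFinset ⊆ Finset.range n := by
    intro x hx
    rw [List.mem_toFinset, List.mem_map] at hx
    obtain ⟨v, _, rfl⟩ := hx
    exact Finset.mem_range.mpr (hr v)
  have := Finset.card_le_card hsub
  rw [List.toFinset_card_of_nodup hnd, Finset.card_range, List.length_map] at this
  exact this

lemma chain_gt_length_le {n : ℕ} (r : V → ℕ) (hr : ∀ v, r v < n) :
    ∀ (m : List V), List.Chain' (fun a b => r b < r a) m → m.length ≤ n := by
  intro m hc
  have : List.Chain' (fun a b => r a < r b) m.reverse := by
    refine List.isChain_reverse.mpr ?_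
    exact hc
  have := chain_lt_length_le r hr m.reverse this
  rwa [List.length_reverse] at this

lemma isUpDown_length_le {n : ℕ} (r : V → ℕ) (hr : ∀ v, r v < n)
    (l : List V) (h : IsUpDown r l) : l.length ≤ 2 * n + 1 := by
  obtain ⟨l₁, x, l₂, rfl, hinc, hdec⟩ := h
  have h1 := chain_lt_length_le r hr (l₁ ++ [x]) hinc
  have h2 := chain_gt_length_le r hr (x :: l₂) hdec
  simp only [List.length_append, List.length_cons, List.length_nil] at *
  omega

/-! #### walk construction and walk length -/

lemma wlen_nil {H : SimpleGraph V} (m : V → V → ℝ≥0∞) (u : V) :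
    wlen m (SimpleGraph.Walk.nil : H.Walk u u) = 0 := by
  simp [wlen]

lemma wlen_cons {H : SimpleGraph V} (m : V → V → ℝ≥0∞) {u v t : V}
    (h : H.Adj u v) (p : H.Walk v t) :
    wlen m (SimpleGraph.Walk.cons h p) = m u v + wlen m p := by
  simp [wlen]

lemma wlen_append {H : SimpleGraph V} (m : V → V → ℝ≥0∞) {u v t : V}
    (p : H.Walk u v) (q : H.Walk v t) :
    wlen m (p.append q) = wlen m p + wlen m q := by
  simp [wlen, SimpleGraph.Walk.darts_append]

lemma exists_walk_of_chain {H : SimpleGraph V} (m : V → V → ℝ≥0∞) :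
    ∀ (l : List V) (s : V), List.Chain' H.Adj (s :: l) →
    ∃ p : H.Walk s ((s :: l).getLastD s),
      p.support = s :: l ∧
      (∀ d ∈ p.darts, Consec (s :: l) d.toProd.1 d.toProd.2) ∧
      wlen m p = pairSum m (s :: l) := by
  intro l
  induction l with
  | nil =>
    intro s _
    exact (⟨SimpleGraph.Walk.nil, by simp, by simp, by simp [wlen, pairSum]⟩ :
      ∃ p : H.Walk s s, p.support = [s] ∧ (∀ d ∈ p.darts, Consec [s] d.toProd.1 d.toProd.2) ∧
        wlen m p = pairSum m [s])
  | cons x l' ih =>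
    intro s hc
    have hadj : H.Adj s x := (List.isChain_cons_cons.mp hc).1
    obtain ⟨q, hsup, hdarts, hwlen⟩ := ih x (List.isChain_cons_cons.mp hc).2
    have hlast : (s :: x :: l').getLastD s = (x :: l').getLastD x := by
      simp only [List.getLastD_cons]
    refine ⟨(SimpleGraph.Walk.cons hadj q).copy rfl hlast.symm, ?_, ?_, ?_⟩
    · rw [SimpleGraph.Walk.support_copy, SimpleGraph.Walk.support_cons, hsup]
    · intro d hd
      rw [SimpleGraph.Walk.darts_copy, SimpleGraph.Walk.darts_cons] at hd
      rcases List.mem_cons.mp hd with rfl | hd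
      · exact ⟨[], l', rfl⟩
      · obtain ⟨l₁, l₂, heq⟩ := hdarts d hd
        exact ⟨s :: l₁, l₂, by rw [List.cons_append, ← heq]⟩
    · show wlen m ((SimpleGraph.Walk.cons hadj q).copy rfl hlast.symm) = _
      have : wlen m ((SimpleGraph.Walk.cons hadj q).copy rfl hlast.symm)
          = wlen m (SimpleGraph.Walk.cons hadj q) := by
        simp [wlen, SimpleGraph.Walk.darts_copy]
      rw [this, wlen_cons, hwlen]
      rfl

lemma consec_adj {H : SimpleGraph V} {l : List V} {a b : V}
    (hc : List.Chain' H.Adj l) (h : Consec l a b) : H.Adj a b := by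
  obtain ⟨l₁, l₂, rfl⟩ := h
  have := (List.isChain_split.mp hc).2
  exact (List.isChain_cons_cons.mp this).1

lemma support_getLast? {H : SimpleGraph V} :
    ∀ {u v : V} (p : H.Walk u v), p.support.getLast? = some v := by
  intro u v p
  induction p with
  | nil => simp
  | @cons a b c h q ih =>
    rw [SimpleGraph.Walk.support_cons]
    have : q.support = b :: q.support.tail := SimpleGraph.Walk.support_eq_cons q
    rw [this] at ih ⊢
    rw [show (a :: b :: q.support.tail) = [a] ++ b :: q.support.tail from rfl,
      getLast?_append_cons]
    exact ih

end Stmt11Aux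

section Stmt11Aux2

open SimpleGraph
open scoped ENNReal

variable {V : Type*}

lemma gdist_le_wlen {H : SimpleGraph V} (m : V → V → ℝ≥0∞) {s t : V} (p : H.Walk s t) :
    gdist H m s t ≤ wlen m p := iInf_le _ p

lemma gdist_self {H : SimpleGraph V} (m : V → V → ℝ≥0∞) (s : V) :
    gdist H m s s = 0 := by
  refine le_antisymm ?_ zero_le
  have := gdist_le_wlen m (SimpleGraph.Walk.nil : H.Walk s s)
  rwa [wlen_nil] at this

lemma gdist_triangle {H : SimpleGraph V} (m : V → V → ℝ≥0∞) (a b c : V) :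
    gdist H m a c ≤ gdist H m a b + gdist H m b c := by
  simp only [gdist]
  rw [ENNReal.iInf_add]
  refine le_iInf fun p => ?_
  rw [ENNReal.add_iInf]
  refine le_iInf fun q => ?_
  exact iInf_le_of_le (p.append q) (le_of_eq (wlen_append m p q))

lemma wlen_reverse {H : SimpleGraph V} (m : V → V → ℝ≥0∞)
    (hm : ∀ a b, m a b = m b a) {u v : V} (p : H.Walk u v) :
    wlen m p.reverse = wlen m p := by
  rw [wlen, wlen, SimpleGraph.Walk.darts_reverse, List.map_reverse, List.sum_reverse,
    List.map_map]
  congr 1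
  refine List.map_congr_left fun d _ => ?_
  simp only [Function.comp_apply, SimpleGraph.Dart.symm_toProd, Prod.fst_swap, Prod.snd_swap]
  exact hm _ _

lemma gdist_comm {H : SimpleGraph V} (m : V → V → ℝ≥0∞)
    (hm : ∀ a b, m a b = m b a) (a b : V) :
    gdist H m a b = gdist H m b a := by
  have key : ∀ (x y : V), gdist H m x y ≤ gdist H m y x := by
    intro x y
    refine le_iInf fun q => ?_
    exact iInf_le_of_le q.reverse (le_of_eq (wlen_reverse m hm q))
  exact le_antisymm (key a b) (key b a)

lemma wlen_lt_top {G : SimpleGraph V} (w : V → V → ℝ≥0∞)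
    (hw : ∀ a b, G.Adj a b → w a b < ⊤) {u v : V} (p : G.Walk u v) :
    wlen w p < ⊤ := by
  induction p with
  | nil => rw [wlen_nil]; exact ENNReal.zero_lt_top
  | cons h q ih =>
    rw [wlen_cons]
    exact ENNReal.add_lt_top.mpr ⟨hw _ _ h, ih⟩

lemma wlen_ge_mul_length {G : SimpleGraph V} (w : V → V → ℝ≥0∞) (ε : ℝ≥0∞)
    (hε : ∀ a b, G.Adj a b → ε ≤ w a b) {u v : V} (p : G.Walk u v) :
    ε * p.length ≤ wlen w p := by
  induction p with
  | nil => simp [wlen_nil]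
  | cons h q ih =>
    rw [wlen_cons, SimpleGraph.Walk.length_cons]
    have : ε * ((q.length : ℝ≥0∞) + 1) = ε + ε * q.length := by ring
    rw [Nat.cast_add, Nat.cast_one, this]
    exact add_le_add (hε _ _ h) ih

lemma gdist_pos {G : SimpleGraph V} [Fintype V] (w : V → V → ℝ≥0∞)
    (hw_pos : ∀ a b, G.Adj a b → 0 < w a b ∧ w a b < ⊤) {a b : V} (hab : a ≠ b) :
    0 < gdist G w a b := by
  classical
  by_cases hE : ∃ u v, G.Adj u v
  · obtain ⟨u₀, v₀, huv⟩ := hE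
    set F : Finset (V × V) := Finset.univ.filter (fun q => G.Adj q.1 q.2) with hF
    have hFne : F.Nonempty := ⟨(u₀, v₀), by simp [hF, huv]⟩
    set ε := F.inf' hFne (fun q => w q.1 q.2) with hε
    have hεpos : 0 < ε := by
      rw [hε, Finset.lt_inf'_iff]
      intro q hq
      rw [hF, Finset.mem_filter] at hq
      exact (hw_pos _ _ hq.2).1
    have hεle : ∀ u v, G.Adj u v → ε ≤ w u v := by
      intro u v h
      have hm : (u, v) ∈ F := by rw [hF]; simp [h]
      exact Finset.inf'_le (fun q : V × V => w q.1 q.2) hm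
    refine lt_of_lt_of_le hεpos (le_iInf fun p => ?_)
    cases p with
    | nil => exact absurd rfl hab
    | cons h q =>
      rw [wlen_cons]
      exact le_trans (hεle _ _ h) le_self_add
  · refine lt_of_lt_of_le ENNReal.zero_lt_top (le_iInf fun p => ?_)
    cases p with
    | nil => exact absurd rfl hab
    | cons h _ => exact absurd ⟨_, _, h⟩ hE

lemma exists_shortest_walk {G : SimpleGraph V} [Fintype V] (hG : G.Connected)
    (w : V → V → ℝ≥0∞)
    (hw_pos : ∀ a b, G.Adj a b → 0 < w a b ∧ w a b < ⊤) (s t : V) :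
    ∃ p : G.Walk s t, wlen w p = gdist G w s t := by
  classical
  by_cases hst : s = t
  · subst hst
    exact ⟨SimpleGraph.Walk.nil, by rw [wlen_nil, gdist_self]⟩
  · obtain ⟨q0⟩ := hG.preconnected s t
    have hedge : ∃ u v, G.Adj u v := by
      cases q0 with
      | nil => exact absurd rfl hst
      | cons h _ => exact ⟨_, _, h⟩
    obtain ⟨u₀, v₀, huv⟩ := hedge
    set F : Finset (V × V) := Finset.univ.filter (fun q => G.Adj q.1 q.2) with hF
    have hFne : F.Nonempty := ⟨(u₀, v₀), by simp [hF, huv]⟩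
    set ε := F.inf' hFne (fun q => w q.1 q.2) with hε
    have hεpos : 0 < ε := by
      rw [hε, Finset.lt_inf'_iff]
      intro q hq
      rw [hF, Finset.mem_filter] at hq
      exact (hw_pos _ _ hq.2).1
    have hεle : ∀ u v, G.Adj u v → ε ≤ w u v := by
      intro u v h
      have hm : (u, v) ∈ F := by rw [hF]; simp [h]
      exact Finset.inf'_le (fun q : V × V => w q.1 q.2) hm
    have hεtop : ε < ⊤ := lt_of_le_of_lt (hεle _ _ huv) (hw_pos _ _ huv).2
    have hdtop : gdist G w s t < ⊤ :=
      lt_of_le_of_lt (gdist_le_wlen w q0) (wlen_lt_top w (fun a b h => (hw_pos a b h).2) q0)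
    obtain ⟨N, hN⟩ := ENNReal.exists_nat_gt (ENNReal.div_lt_top hdtop.ne hεpos.ne').ne
    have hDN : gdist G w s t < (N : ℝ≥0∞) * ε := by
      rwa [ENNReal.div_lt_iff (Or.inl hεpos.ne') (Or.inl hεtop.ne)] at hN
    letI : DecidableEq V := Classical.decEq V
    letI : DecidableRel G.Adj := Classical.decRel _
    set S : Set (G.Walk s t) := {p | p.length < N} with hS
    have hSfin : S.Finite := by
      have hsub : S ⊆ ⋃ k ∈ Finset.range N, {p : G.Walk s t | p.length = k} := by
        intro p hp
        simp only [Set.mem_iUnion, Set.mem_setOf_eq]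
        exact ⟨p.length, Finset.mem_range.mpr hp, rfl⟩
      exact Set.Finite.subset
        (Set.Finite.biUnion (Finset.range N).finite_toSet (fun k _ => Set.toFinite _)) hsub
    obtain ⟨q₁, hq₁⟩ := iInf_lt_iff.mp hDN
    have hq₁len : q₁.length < N := by
      by_contra hcon
      push_neg at hcon
      have h1 : (N : ℝ≥0∞) * ε ≤ (q₁.length : ℝ≥0∞) * ε :=
        mul_le_mul_left (Nat.cast_le.mpr hcon) ε
      have h2 : (q₁.length : ℝ≥0∞) * ε ≤ wlen w q₁ := by
        rw [mul_comm]; exact wlen_ge_mul_length w ε hεle q₁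
      exact absurd (lt_of_lt_of_le hq₁ (le_trans h1 h2)) (lt_irrefl _)
    have hSne : S.Nonempty := ⟨q₁, hq₁len⟩
    obtain ⟨p₀, hp₀S, hp₀min⟩ := Set.exists_min_image S (wlen w) hSfin hSne
    refine ⟨p₀, le_antisymm ?_ (gdist_le_wlen w p₀)⟩
    refine le_iInf fun p => ?_
    by_cases hp : p.length < N
    · exact hp₀min p hp
    · push_neg at hp
      have h1 : (N : ℝ≥0∞) * ε ≤ (p.length : ℝ≥0∞) * ε :=
        mul_le_mul_left (Nat.cast_le.mpr hp) ε
      have h2 : (p.length : ℝ≥0∞) * ε ≤ wlen w p := by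
        rw [mul_comm]; exact wlen_ge_mul_length w ε hεle p
      calc wlen w p₀ ≤ wlen w q₁ := hp₀min q₁ hq₁len
        _ ≤ (N : ℝ≥0∞) * ε := hq₁.le
        _ ≤ wlen w p := le_trans h1 h2

lemma pairSum_ge_of_triangle (D : V → V → ℝ≥0∞)
    (htri : ∀ a b c, D a c ≤ D a b + D b c) (hdiag : ∀ a, D a a = 0) :
    ∀ (l : List V) (s t : V), l.head? = some s → l.getLast? = some t →
      D s t ≤ pairSum D l := by
  intro l
  induction l with
  | nil => intro s t hh _; simp at hh
  | cons a m ih =>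
    intro s t hh hl
    have hsa : s = a := by
      simp only [List.head?_cons, Option.some.injEq] at hh
      exact hh.symm
    cases m with
    | nil =>
      have hta : t = a := by
        simp only [List.getLast?_singleton, Option.some.injEq] at hl
        exact hl.symm
      rw [hsa, hta]
      simp [pairSum, hdiag]
    | cons b m' =>
      have hl' : (b :: m').getLast? = some t := by
        rwa [show (a :: b :: m') = [a] ++ b :: m' from rfl, getLast?_append_cons] at hl
      have h2 := ih b t rfl hl'
      rw [hsa]
      calc D a t ≤ D a b + D b t := htri a b t
        _ ≤ D a b + pairSum D (b :: m') := add_le_add_right h2 _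
        _ = pairSum D (a :: b :: m') := rfl

lemma pairSum_support_le {G : SimpleGraph V} (w : V → V → ℝ≥0∞) :
    ∀ {u v : V} (p : G.Walk u v),
      pairSum (fun a b => gdist G w a b) p.support ≤ wlen w p := by
  intro u v p
  induction p with
  | nil => simp [pairSum, wlen_nil]
  | @cons a b c h q ih =>
    rw [SimpleGraph.Walk.support_cons, wlen_cons]
    have hq : q.support = b :: q.support.tail := SimpleGraph.Walk.support_eq_cons q
    rw [hq]
    rw [hq] at ih
    have h1 : gdist G w a b ≤ w a b := by
      have := gdist_le_wlen w (SimpleGraph.Walk.cons h (SimpleGraph.Walk.nil : G.Walk b b))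
      rwa [wlen_cons, wlen_nil, add_zero] at this
    calc pairSum (fun a b => gdist G w a b) (a :: b :: q.support.tail)
        = gdist G w a b + pairSum (fun a b => gdist G w a b) (b :: q.support.tail) := rfl
      _ ≤ w a b + wlen w q := add_le_add h1 ih

end Stmt11Aux2

section Stmt11Improve

open scoped ENNReal

variable {V : Type*}

lemma noValley_isUpDown' (r : V → ℕ) (l : List V) (hne : l ≠ [])
    (hnv : ¬ ∃ l₁ a v b l₂, l = l₁ ++ a :: v :: b :: l₂ ∧ r v < r a ∧ r v < r b)
    (hch : List.Chain' (fun a b => r a ≠ r b) l) : IsUpDown r l := by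
  obtain ⟨x, m, rfl⟩ := List.exists_cons_of_ne_nil hne
  exact noValley_isUpDown r m x hnv hch

lemma improve {n : ℕ} (C : SimpleGraph V) (r : V → ℕ) (D : V → V → ℝ≥0∞)
    (s t : V) (dst : ℝ≥0∞)
    (hr : ∀ v, r v < n)
    (hradj : ∀ a b, C.Adj a b → r a ≠ r b)
    (hkey : ∀ v a b : V, a ≠ b → r v < r a → r v < r b → C.Adj v a → C.Adj v b → C.Adj a b)
    (hLB : ∀ l : List V, l.head? = some s → l.getLast? = some t → dst ≤ pairSum D l)
    (hDsymm : ∀ a b, D a b = D b a)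
    (htri : ∀ a b c, D a c ≤ D a b + D b c)
    (hDpos : ∀ a b : V, a ≠ b → 0 < D a b)
    (hdst : dst ≠ ⊤)
    (L : ℕ) (hL : 2 * n + 2 ≤ L) :
    ∀ (k : ℕ) (l : List V), List.Chain' C.Adj l → l.head? = some s →
      l.getLast? = some t → pairSum D l = dst → l.length ≤ L →
      L * 3 ^ n + 1 ≤ k + pairSum (fun a b => 3 ^ (min (r a) (r b) + 1)) l →
      ∃ l', List.Chain' C.Adj l' ∧ l'.head? = some s ∧ l'.getLast? = some t ∧
        pairSum D l' = dst ∧ IsUpDown r l' ∧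
        (∀ a b, Consec l' a b → ∃ x y : V, ((a, b) = (x, y) ∨ (a, b) = (y, x)) ∧
          r x < r y ∧
          ¬ ∃ z : V, C.Adj x z ∧ C.Adj z y ∧ r x < r z ∧ D x y = D x z + D z y) := by
  set f : V → V → ℕ := fun a b => 3 ^ (min (r a) (r b) + 1) with hf
  have hfle : ∀ a b, f a b ≤ 3 ^ n := by
    intro a b
    have h1 : min (r a) (r b) + 1 ≤ n := by
      have := hr a; have := hr b
      have : min (r a) (r b) < n := lt_of_le_of_lt (min_le_left _ _) (hr a)
      omega
    exact Nat.pow_le_pow_right (by norm_num) h1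
  have hfpos : ∀ a b, 1 ≤ f a b := fun a b => Nat.one_le_pow _ _ (by norm_num)
  intro k
  induction k with
  | zero =>
    intro l _ _ _ _ hlen hφ
    exfalso
    have h1 := pairSum_le_length f (3 ^ n) hfle l
    have h2 : l.length * 3 ^ n ≤ L * 3 ^ n := Nat.mul_le_mul_right _ hlen
    omega
  | succ k ih =>
    intro l hc hh hl hp hlen hφ
    by_cases hval : ∃ l₁ a v b l₂, l = l₁ ++ a :: v :: b :: l₂ ∧ r v < r a ∧ r v < r b
    · -- T1 : remove a valley
      obtain ⟨l₁, a, v, b, l₂, rfl, hva, hvb⟩ := hval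
      have hsplit := List.isChain_split.mp hc
      have hc1 : List.Chain' C.Adj (l₁ ++ [a]) := hsplit.1
      have hav : C.Adj a v := (List.isChain_cons_cons.mp hsplit.2).1
      have hc3 := (List.isChain_cons_cons.mp hsplit.2).2
      have hvbAdj : C.Adj v b := (List.isChain_cons_cons.mp hc3).1
      have hc4 := (List.isChain_cons_cons.mp hc3).2
      have hPold : pairSum D (l₁ ++ a :: v :: b :: l₂)
          = pairSum D (l₁ ++ [a]) + (D a v + (D v b + pairSum D (b :: l₂))) := by
        rw [pairSum_split D l₁ a (v :: b :: l₂)]; rfl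
      have hh' : (l₁ ++ a :: b :: l₂).head? = some s := by
        rw [head?_append_cons l₁ a (b :: l₂) (v :: b :: l₂)]; exact hh
      have hgb : (b :: l₂).getLast? = some t := by
        have e : l₁ ++ a :: v :: b :: l₂ = (l₁ ++ [a, v]) ++ b :: l₂ := by simp
        rw [e, getLast?_append_cons] at hl
        exact hl
      have hl' : (l₁ ++ a :: b :: l₂).getLast? = some t := by
        have e : l₁ ++ a :: b :: l₂ = (l₁ ++ [a]) ++ b :: l₂ := by simp
        rw [e, getLast?_append_cons]
        exact hgb
      have hvna : v ≠ a := fun h => absurd hva (by rw [h]; exact lt_irrefl _)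
      have hab : a ≠ b := by
        intro h
        subst h
        have hh'' : (l₁ ++ a :: l₂).head? = some s := by
          rw [head?_append_cons l₁ a l₂ (v :: a :: l₂)]; exact hh
        have hl'' : (l₁ ++ a :: l₂).getLast? = some t := by
          rw [show l₁ ++ a :: l₂ = l₁ ++ a :: l₂ from rfl, getLast?_append_cons]
          exact hgb
        have hlow := hLB (l₁ ++ a :: l₂) hh'' hl''
        have hPnew : pairSum D (l₁ ++ a :: l₂)
            = pairSum D (l₁ ++ [a]) + pairSum D (a :: l₂) := pairSum_split D l₁ a l₂
        have hkey2 : dst = pairSum D (l₁ ++ a :: l₂) + (D a v + D v a) := by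
          rw [hPnew, ← hp, hPold]; ring
        have hle2 : pairSum D (l₁ ++ a :: l₂) ≤ dst := by
          rw [hkey2]; exact le_self_add
        have heq2 : pairSum D (l₁ ++ a :: l₂) = dst := le_antisymm hle2 hlow
        have hpos2 : (0 : ℝ≥0∞) < D a v + D v a :=
          lt_of_lt_of_le (hDpos a v (Ne.symm hvna)) le_self_add
        have hdd : dst = dst + (D a v + D v a) := heq2 ▸ hkey2
        exact (ENNReal.lt_add_right hdst hpos2.ne').ne hdd
      have hadj_ab : C.Adj a b := hkey v a b hab hva hvb hav.symm hvbAdj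
      have hc' : List.Chain' C.Adj (l₁ ++ a :: b :: l₂) :=
        List.isChain_split.mpr ⟨hc1, List.isChain_cons_cons.mpr ⟨hadj_ab, hc4⟩⟩
      have hPn : pairSum D (l₁ ++ a :: b :: l₂)
          = pairSum D (l₁ ++ [a]) + (D a b + pairSum D (b :: l₂)) := by
        rw [pairSum_split D l₁ a (b :: l₂)]; rfl
      have hple : pairSum D (l₁ ++ a :: b :: l₂) ≤ dst := by
        rw [hPn, ← hp, hPold]
        refine add_le_add_right ?_ _
        calc D a b + pairSum D (b :: l₂) ≤ (D a v + D v b) + pairSum D (b :: l₂) :=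
              add_le_add_left (htri a v b) _
          _ = D a v + (D v b + pairSum D (b :: l₂)) := add_assoc _ _ _
      have hpeq : pairSum D (l₁ ++ a :: b :: l₂) = dst :=
        le_antisymm hple (hLB _ hh' hl')
      -- φ increases
      have hφold : pairSum f (l₁ ++ a :: v :: b :: l₂)
          = pairSum f (l₁ ++ [a]) + (f a v + (f v b + pairSum f (b :: l₂))) := by
        rw [pairSum_split f l₁ a (v :: b :: l₂)]; rfl
      have hφnew : pairSum f (l₁ ++ a :: b :: l₂)
          = pairSum f (l₁ ++ [a]) + (f a b + pairSum f (b :: l₂)) := by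
        rw [pairSum_split f l₁ a (b :: l₂)]; rfl
      have hfav : f a v = 3 ^ (r v + 1) := by
        simp only [hf]; rw [min_eq_right hva.le]
      have hfvb : f v b = 3 ^ (r v + 1) := by
        simp only [hf]; rw [min_eq_left hvb.le]
      have hfab : 3 ^ (r v + 1) * 3 ≤ f a b := by
        simp only [hf]
        rw [← pow_succ]
        exact Nat.pow_le_pow_right (by norm_num) (by omega)
      have hE : 1 ≤ 3 ^ (r v + 1) := Nat.one_le_pow _ _ (by norm_num)
      have hφinc : pairSum f (l₁ ++ a :: v :: b :: l₂) + 1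
          ≤ pairSum f (l₁ ++ a :: b :: l₂) := by
        rw [hφold, hφnew, hfav, hfvb]
        omega
      have hlen' : (l₁ ++ a :: b :: l₂).length ≤ L := by
        have h1 : (l₁ ++ a :: v :: b :: l₂).length = (l₁ ++ a :: b :: l₂).length + 1 := by
          simp only [List.length_append, List.length_cons]; omega
        omega
      exact ih (l₁ ++ a :: b :: l₂) hc' hh' hl' hpeq hlen' (by omega)
    · -- no valley: l is up-down
      have hne : l ≠ [] := by intro h; rw [h] at hh; exact absurd hh (by simp)
      have hchne : List.Chain' (fun a b => r a ≠ r b) l :=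
        hc.imp (fun {a b} h => hradj a b h)
      have hud : IsUpDown r l := noValley_isUpDown' r l hne hval hchne
      by_cases hpf : ∀ a b, Consec l a b → ∃ x y : V,
          ((a, b) = (x, y) ∨ (a, b) = (y, x)) ∧ r x < r y ∧
          ¬ ∃ z : V, C.Adj x z ∧ C.Adj z y ∧ r x < r z ∧ D x y = D x z + D z y
      · exact ⟨l, hc, hh, hl, hp, hud, hpf⟩
      · push_neg at hpf
        obtain ⟨a, b, hcons, hbad⟩ := hpf
        have hlenud : l.length ≤ 2 * n + 1 := isUpDown_length_le r hr l hud
        have hadj : C.Adj a b := consec_adj hc hcons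
        have hne' : r a ≠ r b := hradj a b hadj
        obtain ⟨l₁, l₂, rfl⟩ := hcons
        have hsplit := List.isChain_split.mp hc
        have hc1 : List.Chain' C.Adj (l₁ ++ [a]) := hsplit.1
        have hc4 : List.Chain' C.Adj (b :: l₂) := (List.isChain_cons_cons.mp hsplit.2).2
        have hgb : (b :: l₂).getLast? = some t := by
          have e : l₁ ++ a :: b :: l₂ = (l₁ ++ [a]) ++ b :: l₂ := by simp
          rw [e, getLast?_append_cons] at hl
          exact hl
        have hPold : pairSum D (l₁ ++ a :: b :: l₂)
            = pairSum D (l₁ ++ [a]) + (D a b + pairSum D (b :: l₂)) := by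
          rw [pairSum_split D l₁ a (b :: l₂)]; rfl
        have hφold : pairSum f (l₁ ++ a :: b :: l₂)
            = pairSum f (l₁ ++ [a]) + (f a b + pairSum f (b :: l₂)) := by
          rw [pairSum_split f l₁ a (b :: l₂)]; rfl
        -- get the witness z, and the two adjacencies a-z, z-b, with D a z + D z b = D a b
        obtain ⟨z, haz, hzb, hDeq, hφkey⟩ :
            ∃ z : V, C.Adj a z ∧ C.Adj z b ∧ (D a z + D z b = D a b) ∧
              (f a b + 1 ≤ f a z + f z b) := by
          rcases lt_or_gt_of_ne hne' with hlt | hgt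
          · obtain ⟨z, hz1, hz2, hz3, hz4⟩ := hbad a b (Or.inl rfl) hlt
            refine ⟨z, hz1, hz2, hz4.symm, ?_⟩
            have h1 : f a b = 3 ^ (r a + 1) := by
              simp only [hf]; rw [min_eq_left hlt.le]
            have h2 : f a z = 3 ^ (r a + 1) := by
              simp only [hf]; rw [min_eq_left hz3.le]
            have := hfpos z b
            omega
          · obtain ⟨z, hz1, hz2, hz3, hz4⟩ := hbad b a (Or.inr rfl) hgt
            refine ⟨z, hz2.symm, hz1.symm, ?_, ?_⟩
            · rw [hDsymm a z, hDsymm z b, hDsymm a b, hz4]; ring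
            · have h1 : f a b = 3 ^ (r b + 1) := by
                simp only [hf]; rw [min_eq_right hgt.le]
              have h2 : f z b = 3 ^ (r b + 1) := by
                simp only [hf]; rw [min_eq_right hz3.le]
              have := hfpos a z
              omega
        have hc' : List.Chain' C.Adj (l₁ ++ a :: z :: b :: l₂) :=
          List.isChain_split.mpr ⟨hc1,
            List.isChain_cons_cons.mpr ⟨haz, List.isChain_cons_cons.mpr ⟨hzb, hc4⟩⟩⟩
        have hh' : (l₁ ++ a :: z :: b :: l₂).head? = some s := by
          rw [head?_append_cons l₁ a (z :: b :: l₂) (b :: l₂)]; exact hh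
        have hl' : (l₁ ++ a :: z :: b :: l₂).getLast? = some t := by
          have e : l₁ ++ a :: z :: b :: l₂ = (l₁ ++ [a, z]) ++ b :: l₂ := by simp
          rw [e, getLast?_append_cons]
          exact hgb
        have hPnew : pairSum D (l₁ ++ a :: z :: b :: l₂)
            = pairSum D (l₁ ++ [a]) + (D a z + (D z b + pairSum D (b :: l₂))) := by
          rw [pairSum_split D l₁ a (z :: b :: l₂)]; rfl
        have hpeq : pairSum D (l₁ ++ a :: z :: b :: l₂) = dst := by
          rw [hPnew, ← hp, hPold, ← hDeq]; ring
        have hφnew : pairSum f (l₁ ++ a :: z :: b :: l₂)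
            = pairSum f (l₁ ++ [a]) + (f a z + (f z b + pairSum f (b :: l₂))) := by
          rw [pairSum_split f l₁ a (z :: b :: l₂)]; rfl
        have hφinc : pairSum f (l₁ ++ a :: b :: l₂) + 1
            ≤ pairSum f (l₁ ++ a :: z :: b :: l₂) := by
          rw [hφold, hφnew]; omega
        have hlen' : (l₁ ++ a :: z :: b :: l₂).length ≤ L := by
          have h1 : (l₁ ++ a :: z :: b :: l₂).length
              = (l₁ ++ a :: b :: l₂).length + 1 := by
            simp only [List.length_append, List.length_cons]; omega
          omega
        exact ih (l₁ ++ a :: z :: b :: l₂) hc' hh' hl' hpeq hlen' (by omega)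

end Stmt11Improve

/-- Perfect witness search, general variant. Deleting from `G^∧π`
every arc `(x, y)` admitting an intermediate or upper triangle `{x, y, z}` with
`m_P x y = m_P x z + m_P z y` preserves, for all `s`, `t`, an up-down `s`-`t` path
of length (under the perfect metric `m_P`) the shortest `s`-`t` distance in `G`. -/
theorem stmt11 {V : Type*} {n : ℕ} (G : SimpleGraph V) (hG : G.Connected)
    (π : Fin n ≃ V) (w : V → V → ℝ≥0∞)
    (hw_symm : ∀ a b, w a b = w b a)
    (hw_pos : ∀ a b, G.Adj a b → 0 < w a b ∧ w a b < ⊤) :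
    ∀ s t : V, ∃ p : (chGraph G π).Walk s t,
      IsUpDown (rk π) p.support ∧
      (∀ d ∈ p.darts, ∃ x y : V, (d.toProd = (x, y) ∨ d.toProd = (y, x)) ∧
        rk π x < rk π y ∧
        ¬ ∃ z : V, (chGraph G π).Adj x z ∧ (chGraph G π).Adj z y ∧ rk π x < rk π z ∧
          gdist G w x y = gdist G w x z + gdist G w z y) ∧
      wlen (fun a b => gdist G w a b) p = gdist G w s t := by
  classical
  intro s t
  haveI : Fintype V := Fintype.ofEquiv (Fin n) π
  have htri : ∀ a b c : V, gdist G w a c ≤ gdist G w a b + gdist G w b c :=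
    fun a b c => gdist_triangle w a b c
  have hdiag : ∀ a : V, gdist G w a a = 0 := fun a => gdist_self w a
  have hDsymm : ∀ a b : V, gdist G w a b = gdist G w b a :=
    fun a b => gdist_comm w hw_symm a b
  have hDpos : ∀ a b : V, a ≠ b → 0 < gdist G w a b := fun a b h => gdist_pos w hw_pos h
  have hLB := pairSum_ge_of_triangle (fun a b => gdist G w a b) htri hdiag
  have hr : ∀ v : V, rk π v < n := fun v => (π.symm v).isLt
  have hrinj : ∀ a b : V, (chGraph G π).Adj a b → rk π a ≠ rk π b := by
    intro a b hab heq
    exact hab.ne (π.symm.injective (Fin.val_injective heq))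
  have hkey : ∀ v a b : V, a ≠ b → rk π v < rk π a → rk π v < rk π b →
      (chGraph G π).Adj v a → (chGraph G π).Adj v b → (chGraph G π).Adj a b :=
    fun v a b h1 h2 h3 h4 h5 => chGraph_key G π h1 h2 h3 h4 h5
  obtain ⟨p₀, hp₀⟩ := exists_shortest_walk hG w hw_pos s t
  have hc₀ : List.Chain' (chGraph G π).Adj p₀.support := by
    have h := p₀.isChain_adj_support
    exact h.imp (fun {a b} hab => le_chList ((List.finRange n).map ⇑π) G hab)
  have hh₀ : p₀.support.head? = some s := by
    rw [SimpleGraph.Walk.support_eq_cons]; rfl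
  have hl₀t : p₀.support.getLast? = some t := support_getLast? p₀
  have hp₀eq : pairSum (fun a b => gdist G w a b) p₀.support = gdist G w s t := by
    refine le_antisymm ?_ (hLB p₀.support s t hh₀ hl₀t)
    rw [← hp₀]
    exact pairSum_support_le w p₀
  have hdst_top : gdist G w s t ≠ ⊤ := by
    obtain ⟨q⟩ := hG.preconnected s t
    exact (lt_of_le_of_lt (gdist_le_wlen w q)
      (wlen_lt_top w (fun a b h => (hw_pos a b h).2) q)).ne
  obtain ⟨l', hc', hh', hl', hpeq', hud', hpf'⟩ :=
    improve (chGraph G π) (rk π) (fun a b => gdist G w a b) s t (gdist G w s t)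
      hr hrinj hkey (fun l hh hl => hLB l s t hh hl) hDsymm htri hDpos hdst_top
      (max p₀.support.length (2 * n + 2)) (le_max_right _ _)
      (max p₀.support.length (2 * n + 2) * 3 ^ n + 1)
      p₀.support hc₀ hh₀ hl₀t hp₀eq (le_max_left _ _) (Nat.le_add_right _ _)
  obtain ⟨ltail, rfl⟩ : ∃ m, l' = s :: m := by
    cases l' with
    | nil => exact absurd hh' (by simp)
    | cons x m =>
      have : x = s := by simpa using hh'
      exact ⟨m, by rw [this]⟩
  obtain ⟨p, hsup, hdarts, hwlen⟩ :=
    exists_walk_of_chain (fun a b => gdist G w a b) ltail s hc'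
  have hend : (s :: ltail).getLastD s = t := by
    rw [List.getLastD_eq_getLast?, hl']
    rfl
  refine ⟨p.copy rfl hend, ?_, ?_, ?_⟩
  · rw [SimpleGraph.Walk.support_copy, hsup]
    exact hud'
  · intro d hd
    rw [SimpleGraph.Walk.darts_copy] at hd
    obtain ⟨x, y, hxy, hrxy, hnz⟩ := hpf' d.toProd.1 d.toProd.2 (hdarts d hd)
    refine ⟨x, y, ?_, hrxy, hnz⟩
    rcases hxy with h | h
    · rw [Prod.mk.eta] at h
      exact Or.inl h
    · rw [Prod.mk.eta] at h
      exact Or.inr h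
  · have hcopy : wlen (fun a b => gdist G w a b) (p.copy rfl hend)
        = wlen (fun a b => gdist G w a b) p := by
      simp [wlen, SimpleGraph.Walk.darts_copy]
    rw [hcopy, hwlen]
    exact hpeq'
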